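/- Let μ be a σ-ergodic, F-invariant measure for a cellular automaton F of radius r with a μ-almost equicontinuous point. Then F restricted to S(μ) is surjective onto S(μ), and S(μ) is both σ-invariant and F-invariant (F(S(μ)) = S(μ)). -/
import Mathlib


open MeasureTheory Filter Set Topology

abbrev Config (A : Type*) := ℤ → A

def shift {A : Type*} (x : Config A) : Config A := fun i => x (i + 1)

def shiftZ {A : Type*} (m : ℤ) (x : Config A) : Config A := fun i => x (i + m)

def hasRadius {A : Type*} (F : Config A → Config A) (r : ℕ) : Prop :=
  ∀ x y : Config A, ∀ i : ℤ, (∀ j : ℤ, |j - i| ≤ (r : ℤ) → x j = y j) → F x i = F y i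

def cyl {A : Type*} (m : ℕ) (x : Config A) : Set (Config A) :=
  {y | ∀ i : ℤ, |i| ≤ (m : ℤ) → y i = x i}

def Bset {A : Type*} (F : Config A → Config A) (n : ℕ) (x : Config A) : Set (Config A) :=
  {y | ∀ k : ℕ, ∀ i : ℤ, |i| ≤ (n : ℤ) → F^[k] y i = F^[k] x i}

/-- The topological support of a measure. -/
def msupp {A : Type*} [TopologicalSpace A] [MeasurableSpace A]
    (μ : Measure (Config A)) : Set (Config A) :=
  {x | ∀ U : Set (Config A), IsOpen U → x ∈ U → 0 < μ U}

section Aux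

variable {A : Type*} [Fintype A] [TopologicalSpace A] [DiscreteTopology A]
    [MeasurableSpace A] [MeasurableSingletonClass A]

lemma borelA : BorelSpace A := by
  constructor
  rw [borel_eq_top_of_discrete]
  refine le_antisymm (fun s _ => s.to_countable.measurableSet) le_top |>.symm

/-- A cellular automaton of finite radius is continuous. -/
lemma continuous_of_hasRadius {F : Config A → Config A} {r : ℕ}
    (hF : hasRadius F r) : Continuous F := by
  refine continuous_pi fun i => IsLocallyConstant.continuous ?_
  refine (IsLocallyConstant.iff_exists_open _).2 fun x => ?_
  refine ⟨⋂ j ∈ Finset.Icc (i - (r : ℤ)) (i + (r : ℤ)), (fun y : Config A => y j) ⁻¹' {x j},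
    ?_, ?_, ?_⟩
  · exact isOpen_biInter_finset fun j _ =>
      (isOpen_discrete {x j}).preimage (continuous_apply j)
  · simp
  · intro y hy
    simp only [Set.mem_iInter, Set.mem_preimage, Set.mem_singleton_iff, Finset.mem_Icc] at hy
    refine hF y x i fun j hj => ?_
    rw [abs_le] at hj
    exact hy j ⟨by omega, by omega⟩

lemma msupp_isClosed (μ : Measure (Config A)) : IsClosed (msupp μ) := by
  rw [← isOpen_compl_iff, isOpen_iff_mem_nhds]
  intro x hx
  simp only [msupp, Set.mem_compl_iff, Set.mem_setOf_eq, not_forall] at hx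
  obtain ⟨U, hU, hxU, hμ⟩ := hx
  have hμ0 : μ U = 0 := by simpa using hμ
  refine Filter.mem_of_superset (hU.mem_nhds hxU) fun y hy => ?_
  simp only [msupp, Set.mem_compl_iff, Set.mem_setOf_eq, not_forall]
  exact ⟨U, hU, hy, by simp [hμ0]⟩

lemma msupp_compl_null (μ : Measure (Config A)) : μ (msupp μ)ᶜ = 0 := by
  refine measure_null_of_locally_null _ fun x hx => ?_
  simp only [msupp, Set.mem_compl_iff, Set.mem_setOf_eq, not_forall] at hx
  obtain ⟨U, hU, hxU, hμ⟩ := hx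
  exact ⟨U, mem_nhdsWithin_of_mem_nhds (hU.mem_nhds hxU), by simpa using hμ⟩

end Aux

/-- If μ is σ-ergodic and F-invariant and F has a μ-almost equicontinuous point,
then F restricted to S(μ) is surjective onto S(μ), and S(μ) is σ-invariant and
F-invariant with F(S(μ)) = S(μ). -/
theorem stmt19 {A : Type*} [Fintype A] [TopologicalSpace A] [DiscreteTopology A]
    [MeasurableSpace A] [MeasurableSingletonClass A]
    (μ : Measure (Config A)) [IsProbabilityMeasure μ]
    (herg : Ergodic (shift : Config A → Config A) μ)
    (F : Config A → Config A) (r : ℕ) (hF : hasRadius F r)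
    (hinv : ∀ s : Set (Config A), MeasurableSet s → μ (F ⁻¹' s) = μ s)
    (heq : ∃ x : Config A, ∀ n : ℕ, r ≤ n → 0 < μ (Bset F n x)) :
    Set.SurjOn F (msupp μ) (msupp μ) ∧
    (∀ x ∈ msupp μ, shift x ∈ msupp μ) ∧
    F '' msupp μ = msupp μ := by
  haveI : BorelSpace A := borelA
  have hFc : Continuous F := continuous_of_hasRadius hF
  set K := msupp μ with hK
  have hKclosed : IsClosed K := msupp_isClosed μ
  have hKone : μ K = 1 := by
    have := msupp_compl_null μ
    have h := measure_add_measure_compl (μ := μ) hKclosed.measurableSet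
    rw [this, add_zero] at h
    simpa using h
  -- F maps the support into itself
  have hsub : F '' K ⊆ K := by
    rintro _ ⟨x, hx, rfl⟩ U hU hFxU
    have : 0 < μ (F ⁻¹' U) := hx _ (hU.preimage hFc) hFxU
    rwa [hinv U hU.measurableSet] at this
  -- F '' K is closed with full measure
  have hFKclosed : IsClosed (F '' K) :=
    (hKclosed.isCompact.image hFc).isClosed
  have hFKone : μ (F '' K) = 1 := by
    have h1 : μ (F ⁻¹' (F '' K)) = μ (F '' K) := hinv _ hFKclosed.measurableSet
    have h2 : K ⊆ F ⁻¹' (F '' K) := Set.subset_preimage_image F K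
    have h3 : (1 : ENNReal) ≤ μ (F '' K) := by
      rw [← h1]
      calc (1 : ENNReal) = μ K := hKone.symm
        _ ≤ μ (F ⁻¹' (F '' K)) := measure_mono h2
    exact le_antisymm (prob_le_one) h3
  -- surjectivity: K ⊆ F '' K
  have hsurj : K ⊆ F '' K := by
    intro x hx
    by_contra hxn
    have hpos : 0 < μ (F '' K)ᶜ := hx _ hFKclosed.isOpen_compl hxn
    have : μ (F '' K)ᶜ = 0 := by
      rw [measure_compl hFKclosed.measurableSet (measure_ne_top μ _), hFKone]
      simp
    simp [this] at hpos
  refine ⟨hsurj, ?_, le_antisymm hsub hsurj⟩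
  -- shift invariance
  intro x hx U hU hxU
  have hm : MeasurePreserving (shift : Config A → Config A) μ μ := herg.toMeasurePreserving
  have hsc : Continuous (shift : Config A → Config A) :=
    continuous_pi fun i => continuous_apply (i + 1)
  have : 0 < μ (shift ⁻¹' U) := hx _ (hU.preimage hsc) hxU
  rwa [hm.measure_preimage hU.measurableSet.nullMeasurableSet] at this
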